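/- Every legal move in a residual graph decreases the total weight by at least 3. -/

import Mathlib

open SimpleGraph Finset

inductive GameColor | white | green | blue | red
deriving DecidableEq

def GameColor.weight : GameColor → ℕ
  | white => 3
  | green => 2
  | blue => 1
  | red => 0

variable {V : Type} [Fintype V] [DecidableEq V]

/-- The set of vertices totally dominated by the played set `D`. -/
def totDom (G : SimpleGraph V) [DecidableRel G.Adj] (D : Finset V) : Finset V :=
  Finset.univ.filter fun u => ∃ v ∈ D, G.Adj u v

/-- A vertex `v` is a legal move if playing it totally dominates a new vertex. -/
def isLegal (G : SimpleGraph V) [DecidableRel G.Adj] (D : Finset V) (v : V) : Prop :=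
  ∃ u, G.Adj v u ∧ u ∉ totDom G D

instance (G : SimpleGraph V) [DecidableRel G.Adj] (D : Finset V) :
    DecidablePred (isLegal G D) := fun v =>
  decidable_of_iff (∃ u, G.Adj v u ∧ u ∉ totDom G D) Iff.rfl

/-- The color of a vertex in the partially total dominated graph with played set `D`. -/
def colorOf (G : SimpleGraph V) [DecidableRel G.Adj] (D : Finset V) (v : V) : GameColor :=
  if v ∈ totDom G D then
    (if isLegal G D v then .blue else .red)
  else (if v ∈ D then .green else .white)

/-- The total weight of the colored graph. -/
def totalWeight (G : SimpleGraph V) [DecidableRel G.Adj] (D : Finset V) : ℕ :=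
  ∑ v, (colorOf G D v).weight

/-- The residualGraph graph: delete red vertices and blue–blue edges. -/
def residualGraph (G : SimpleGraph V) [DecidableRel G.Adj] (D : Finset V) : SimpleGraph V where
  Adj u w := G.Adj u w ∧ colorOf G D u ≠ .red ∧ colorOf G D w ≠ .red ∧
      ¬(colorOf G D u = .blue ∧ colorOf G D w = .blue)
  symm := ⟨fun u w ⟨h, a, b, c⟩ => ⟨h.symm, b, a, fun ⟨x, y⟩ => c ⟨y, x⟩⟩⟩
  loopless := ⟨fun u ⟨h, _⟩ => G.loopless.irrefl u h⟩

instance (G : SimpleGraph V) [DecidableRel G.Adj] (D : Finset V) :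
    DecidableRel (residualGraph G D).Adj := fun u w =>
  decidable_of_iff (G.Adj u w ∧ colorOf G D u ≠ .red ∧ colorOf G D w ≠ .red ∧
      ¬(colorOf G D u = .blue ∧ colorOf G D w = .blue)) Iff.rfl

def legalMoves (G : SimpleGraph V) [DecidableRel G.Adj] (D : Finset V) : Finset V :=
  Finset.univ.filter (isLegal G D)

/-- The value of the total domination game from position `D` with `fuel` moves allowed,
where `isDom = true` when it is Dominator's turn (Dominator minimizes, Staller maximizes).
Since each legal move totally dominates a new vertex, fuel `Fintype.card V` always suffices. -/
def gameVal (G : SimpleGraph V) [DecidableRel G.Adj] : Bool → ℕ → Finset V → ℕ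
  | _, 0, _ => 0
  | isDom, n + 1, D =>
    if h : (legalMoves G D).Nonempty then
      if isDom then 1 + (legalMoves G D).inf' h fun v => gameVal G false n (insert v D)
      else 1 + (legalMoves G D).sup' h fun v => gameVal G true n (insert v D)
    else 0

/-- The game total domination number `γ_tg(G)`: Dominator starts, both play optimally. -/
def gtd (G : SimpleGraph V) [DecidableRel G.Adj] : ℕ :=
  gameVal G true (Fintype.card V) ∅

lemma mem_totDom' (G : SimpleGraph V) [DecidableRel G.Adj] {D : Finset V} {u : V} :
    u ∈ totDom G D ↔ ∃ v ∈ D, G.Adj u v := by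
  simp [totDom]

lemma totDom_subset' (G : SimpleGraph V) [DecidableRel G.Adj] {D : Finset V} {v w : V}
    (h : w ∈ totDom G D) : w ∈ totDom G (insert v D) := by
  rw [mem_totDom'] at *
  obtain ⟨x, hx, hxw⟩ := h
  exact ⟨x, Finset.mem_insert_of_mem hx, hxw⟩

lemma weight_mono' (G : SimpleGraph V) [DecidableRel G.Adj] (D : Finset V) (v w : V) :
    (colorOf G (insert v D) w).weight ≤ (colorOf G D w).weight := by
  have h2 : isLegal G (insert v D) w → isLegal G D w := by
    rintro ⟨x, hx, hxd⟩
    exact ⟨x, hx, fun h => hxd (totDom_subset' G h)⟩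
  have h1 : w ∈ totDom G D → w ∈ totDom G (insert v D) := totDom_subset' G
  have h3 : w ∈ D → w ∈ insert v D := Finset.mem_insert_of_mem
  unfold colorOf
  split_ifs <;> simp_all [GameColor.weight]

/-- Every legal move in a residual graph decreases the total weight by at
least 3. -/
theorem stmt3 (G : SimpleGraph V) [DecidableRel G.Adj] (D : Finset V) (v : V)
    (hv : isLegal G D v) :
    totalWeight G (insert v D) + 3 ≤ totalWeight G D := by
  classical
  obtain ⟨u, hadj, huD⟩ := hv
  have huv : u ≠ v := hadj.ne'
  set D' := insert v D with hD'
  -- u is totally dominated after the move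
  have huD' : u ∈ totDom G D' := (mem_totDom' G).mpr ⟨v, Finset.mem_insert_self _ _, hadj.symm⟩
  -- v is not legal after the move
  have hvnl : ¬ isLegal G D' v := by
    rintro ⟨x, hx, hxd⟩
    exact hxd ((mem_totDom' G).mpr ⟨v, Finset.mem_insert_self _ _, hx.symm⟩)
  -- v was not already played
  have hvD : v ∉ D := fun h =>
    huD ((mem_totDom' G).mpr ⟨v, h, hadj.symm⟩)
  -- v is dominated after iff dominated before
  have hvt : v ∈ totDom G D' ↔ v ∈ totDom G D := by
    constructor
    · intro h
      rw [mem_totDom'] at h ⊢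
      obtain ⟨x, hx, hxa⟩ := h
      rcases Finset.mem_insert.mp hx with rfl | hx
      · exact absurd hxa (G.loopless.irrefl _)
      · exact ⟨x, hx, hxa⟩
    · exact totDom_subset' G
  -- drop at v is at least 1
  have hv1 : (colorOf G D' v).weight + 1 ≤ (colorOf G D v).weight := by
    have hvl : isLegal G D v := ⟨u, hadj, huD⟩
    by_cases h : v ∈ totDom G D
    · simp [colorOf, h, hvt.mpr h, hvnl, hvl, GameColor.weight]
    · have hvnt : v ∉ totDom G D' := fun hh => h (hvt.mp hh)
      simp [colorOf, h, (show v ∉ totDom G (insert v D) from hvnt), hvD, hD', Finset.mem_insert_self, GameColor.weight]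
  -- drop at u is at least 2
  have hu2 : (colorOf G D' u).weight + 2 ≤ (colorOf G D u).weight := by
    by_cases huDm : u ∈ D
    · have hnl : ¬ isLegal G D' u := by
        rintro ⟨x, hx, hxd⟩
        exact hxd ((mem_totDom' G).mpr ⟨u, Finset.mem_insert_of_mem huDm, hx.symm⟩)
      simp [colorOf, huD', huD, hnl, huDm, GameColor.weight]
    · simp only [colorOf, if_pos huD', if_neg huD, if_neg huDm]
      split_ifs <;> simp [GameColor.weight]
  -- sum decomposition
  have hdecomp : ∀ g : V → ℕ, ∑ w, g w =
      g u + (g v + ∑ w ∈ (Finset.univ.erase u).erase v, g w) := by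
    intro g
    rw [← Finset.add_sum_erase _ g (Finset.mem_univ u),
      ← Finset.add_sum_erase _ g
        (Finset.mem_erase.mpr ⟨huv.symm, Finset.mem_univ v⟩)]
  have hS : ∑ w ∈ (Finset.univ.erase u).erase v, (colorOf G D' w).weight ≤
      ∑ w ∈ (Finset.univ.erase u).erase v, (colorOf G D w).weight :=
    Finset.sum_le_sum fun w _ => weight_mono' G D v w
  unfold totalWeight
  rw [hdecomp fun w => (colorOf G D' w).weight, hdecomp fun w => (colorOf G D w).weight]
  omega
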